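/- Let f : X → Y and u : Y' → Y be continuous maps of topological spaces, and let X' := {(y', x, p) | y' ∈ Y', x ∈ X, p a path in Y from u(y') to f(x)}, topologized as a subspace of Y' × X × C([0,1],Y), with projection f' : X' → Y', (y',x,p) ↦ y'. Then for every y' ∈ Y', the homotopy fiber of f' at y' is homotopy equivalent to the homotopy fiber of f : X → Y at the point u(y'). -/

import Mathlib

open scoped unitInterval

/-- The homotopy fiber of `f : X → Y` at `y : Y`: pairs `(x, p)` with `p` a path
from `f x` to `y`, topologized as a subspace of `X × C(I, Y)`. -/
abbrev HomotopyFiber {X Y : Type*} [TopologicalSpace X] [TopologicalSpace Y]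
    (f : X → Y) (y : Y) : Type _ :=
  {p : X × C(I, Y) // p.2 0 = f p.1 ∧ p.2 1 = y}

/-- The homotopy pullback `X' = {(y', x, p) | p : path from u(y') to f(x)}`,
topologized as a subspace of `Y' × X × C(I, Y)`. -/
abbrev PullbackSpace {X Y Y' : Type*} [TopologicalSpace X] [TopologicalSpace Y]
    [TopologicalSpace Y'] (f : X → Y) (u : Y' → Y) : Type _ :=
  {q : Y' × X × C(I, Y) // q.2.2 0 = u q.1 ∧ q.2.2 1 = f q.2.1}

/-- The projection `f' : X' → Y'`. -/
def pbToY' {X Y Y' : Type*} [TopologicalSpace X] [TopologicalSpace Y] [TopologicalSpace Y']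
    (f : X → Y) (u : Y' → Y) : PullbackSpace f u → Y' :=
  fun q => q.1.1

namespace Stmt4

noncomputable def projI : ℝ → I := Set.projIcc 0 1 zero_le_one

lemma continuous_projI : Continuous projI := continuous_projIcc

lemma coe_projI (x : ℝ) : (projI x : ℝ) = max 0 (min 1 x) := Set.coe_projIcc 0 1 zero_le_one x

@[simp] lemma projI_coe (t : I) : projI ↑t = t := by
  apply Subtype.ext; rw [coe_projI, min_eq_right t.2.2, max_eq_right t.2.1]

@[simp] lemma projI_zero : projI 0 = 0 := by have := projI_coe 0; simpa using this

@[simp] lemma projI_one : projI 1 = 1 := by have := projI_coe 1; simpa using this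

lemma contEval {Z W : Type*} [TopologicalSpace Z] [TopologicalSpace W] {g : Z → C(I,W)}
    {h : Z → I} (hg : Continuous g) (hh : Continuous h) :
    Continuous fun z => (g z) (h z) :=
  continuous_eval.comp (hg.prodMk hh)

variable {X Y Y' : Type*} [TopologicalSpace X] [TopologicalSpace Y] [TopologicalSpace Y']
variable {f : X → Y} {u : Y' → Y}

section
variable (hu : Continuous u) (y' : Y')

/-- Path component of the forward map `F`: the reverse of `p` followed by `u ∘ q`. -/
noncomputable def Fpath : C(HomotopyFiber (pbToY' f u) y' × I, Y) where
  toFun z := if (z.2 : ℝ) ≤ 1/2 then z.1.1.1.1.2.2 (projI (1 - 2*z.2))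
             else u (z.1.1.2 (projI (2*z.2 - 1)))
  continuous_toFun := by
    apply Continuous.if_le
    · exact contEval (by fun_prop) (continuous_projI.comp (by fun_prop))
    · exact hu.comp (contEval (by fun_prop) (continuous_projI.comp (by fun_prop)))
    · fun_prop
    · fun_prop
    · rintro ⟨a, t⟩ h
      simp only at h ⊢
      have h1 : 1 - 2*(t:ℝ) = 0 := by rw [h]; ring
      have h2 : 2*(t:ℝ) - 1 = 0 := by rw [h]; ring
      rw [h1, h2, projI_zero, a.1.1.2.1, a.2.1]
      rfl

/-- The forward map `F : HF(f') → HF(f)`. -/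
noncomputable def Fmap : C(HomotopyFiber (pbToY' f u) y', HomotopyFiber f (u y')) where
  toFun a := ⟨(a.1.1.1.2.1, (Fpath hu y').curry a), by
      constructor
      · show Fpath hu y' (a, 0) = _
        simp only [Fpath, ContinuousMap.coe_mk]
        norm_num
        rw [a.1.1.2.2]
      · show Fpath hu y' (a, 1) = _
        simp only [Fpath, ContinuousMap.coe_mk]
        norm_num
        rw [a.2.2]⟩
  continuous_toFun := by
    apply Continuous.subtype_mk
    exact (by fun_prop : Continuous fun a : HomotopyFiber (pbToY' f u) y' => a.1.1.1.2.1).prodMk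
      (Fpath hu y').curry.continuous

/-- Path component of the backward map `G`: the reverse of `r`. -/
noncomputable def Gpath : C(HomotopyFiber f (u y') × I, Y) where
  toFun z := z.1.1.2 (unitInterval.symm z.2)
  continuous_toFun := contEval (by fun_prop) (unitInterval.continuous_symm.comp continuous_snd)

/-- The backward map `G : HF(f) → HF(f')`. -/
noncomputable def Gmap : C(HomotopyFiber f (u y'), HomotopyFiber (pbToY' f u) y') where
  toFun b := ⟨(⟨(y', b.1.1, (Gpath y').curry b), by
      constructor
      · show Gpath y' (b, 0) = _
        simp only [Gpath, ContinuousMap.coe_mk, unitInterval.symm_zero]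
        exact b.2.2
      · show Gpath y' (b, 1) = _
        simp only [Gpath, ContinuousMap.coe_mk, unitInterval.symm_one]
        exact b.2.1⟩, ContinuousMap.const I y'), ⟨rfl, rfl⟩⟩
  continuous_toFun := by
    apply Continuous.subtype_mk
    apply Continuous.prodMk
    · apply Continuous.subtype_mk
      exact continuous_const.prodMk
        ((by fun_prop : Continuous fun b : HomotopyFiber f (u y') => b.1.1).prodMk
          (Gpath y').curry.continuous)
    · exact continuous_const

/-- Path (`Y`-valued) component of the homotopy `id ≃ G ∘ F`; `w = ((s, a), t)`. -/
noncomputable def Hpath : C((I × HomotopyFiber (pbToY' f u) y') × I, Y) where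
  toFun w := if (w.2 : ℝ) ≤ (w.1.1 : ℝ)/2 then u (w.1.2.1.2 (projI (w.1.1 - 2*w.2)))
             else w.1.2.1.1.1.2.2 (projI ((2*w.2 - w.1.1)/(2 - w.1.1)))
  continuous_toFun := by
    apply Continuous.if_le
    · exact hu.comp (contEval (by fun_prop) (continuous_projI.comp (by fun_prop)))
    · refine contEval (by fun_prop) (continuous_projI.comp ?_)
      refine Continuous.div (by fun_prop) (by fun_prop) fun w => ?_
      have h := w.1.1.2.2
      exact ne_of_gt (by linarith : (0:ℝ) < 2 - (w.1.1 : ℝ))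
    · fun_prop
    · fun_prop
    · rintro ⟨⟨s, a⟩, t⟩ h
      simp only at h ⊢
      have h1 : (s:ℝ) - 2*t = 0 := by rw [h]; ring
      have h2 : (2*(t:ℝ) - s)/(2 - s) = 0 := by
        have : (2*(t:ℝ) - s) = 0 := by rw [h]; ring
        rw [this, zero_div]
      rw [h1, h2, projI_zero, a.1.1.2.1, a.2.1]
      rfl

/-- `Y'`-valued path component of the homotopy `id ≃ G ∘ F`. -/
noncomputable def Hq : C((I × HomotopyFiber (pbToY' f u) y') × I, Y') where
  toFun w := w.1.2.1.2 (projI (max (w.1.1 : ℝ) (w.2 : ℝ)))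
  continuous_toFun :=
    contEval (by fun_prop) (continuous_projI.comp (by fun_prop))

/-- The homotopy `id ≃ G ∘ F` as a continuous map. -/
noncomputable def Hmap :
    C(I × HomotopyFiber (pbToY' f u) y', HomotopyFiber (pbToY' f u) y') where
  toFun z := ⟨(⟨(z.2.1.2 z.1, z.2.1.1.1.2.1, (Hpath hu y').curry z), by
      constructor
      · show Hpath hu y' (z, 0) = _
        simp only [Hpath, ContinuousMap.coe_mk]
        rw [if_pos (by simpa using div_nonneg z.1.2.1 (by norm_num : (0:ℝ) ≤ 2))]
        norm_num
      · show Hpath hu y' (z, 1) = _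
        simp only [Hpath, ContinuousMap.coe_mk]
        rw [if_neg (by
          have h := z.1.2.2
          simp only [Set.Icc.coe_one]
          push_neg
          linarith)]
        have h2 : (2*((1:I):ℝ) - z.1)/(2 - z.1) = 1 := by
          have h := z.1.2.2
          rw [Set.Icc.coe_one]
          rw [show (2*(1:ℝ) - z.1) = 2 - z.1 by ring]
          exact div_self (ne_of_gt (by linarith))
        rw [h2, projI_one, z.2.1.1.2.2]⟩, (Hq y').curry z), by
      constructor
      · show Hq y' (z, 0) = _
        simp only [Hq, ContinuousMap.coe_mk]
        show _ = z.2.1.2 z.1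
        congr 1
        rw [show max (z.1 : ℝ) ((0:I) : ℝ) = (z.1 : ℝ) by
          simpa using max_eq_left z.1.2.1]
        exact projI_coe z.1
      · show Hq y' (z, 1) = _
        simp only [Hq, ContinuousMap.coe_mk]
        rw [show max (z.1 : ℝ) ((1:I) : ℝ) = ((1:I) : ℝ) by
          simpa using max_eq_right z.1.2.2, projI_coe, z.2.2.2]⟩
  continuous_toFun := by
    apply Continuous.subtype_mk
    apply Continuous.prodMk
    · apply Continuous.subtype_mk
      refine Continuous.prodMk ?_ (Continuous.prodMk (by fun_prop)
        (Hpath hu y').curry.continuous)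
      exact contEval (by fun_prop) continuous_fst
    · exact (Hq y').curry.continuous

/-- The homotopy `id ≃ G ∘ F`. -/
noncomputable def Hhomotopy :
    ContinuousMap.Homotopy (ContinuousMap.id (HomotopyFiber (pbToY' f u) y'))
      ((Gmap y').comp (Fmap hu y')) where
  toContinuousMap := Hmap hu y'
  map_zero_left a := by
    apply Subtype.ext
    apply Prod.ext
    · apply Subtype.ext
      refine Prod.ext ?_ (Prod.ext rfl ?_)
      · show a.1.2 0 = _
        exact a.2.1
      · ext t
        show Hpath hu y' ((0, a), t) = a.1.1.1.2.2 t
        simp only [Hpath, ContinuousMap.coe_mk]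
        by_cases hc : (t : ℝ) ≤ ((0:I) : ℝ)/2
        · rw [if_pos hc]
          have ht0 : (t : ℝ) = 0 := le_antisymm (by simpa using hc) t.2.1
          have : t = 0 := Subtype.ext ht0
          subst this
          rw [show ((0:I):ℝ) - 2*((0:I):ℝ) = 0 by norm_num, projI_zero,
            a.2.1, a.1.1.2.1]
          rfl
        · rw [if_neg hc]
          congr 1
          rw [show (2*(t:ℝ) - (0:I))/(2 - (0:I)) = (t:ℝ) by
            rw [Set.Icc.coe_zero]; ring, projI_coe]
    · ext t
      show Hq y' ((0, a), t) = a.1.2 t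
      simp only [Hq, ContinuousMap.coe_mk]
      rw [show max ((0:I):ℝ) (t:ℝ) = (t:ℝ) by simpa using max_eq_right t.2.1, projI_coe]
  map_one_left a := by
    apply Subtype.ext
    apply Prod.ext
    · apply Subtype.ext
      refine Prod.ext ?_ (Prod.ext rfl ?_)
      · show a.1.2 1 = y'
        exact a.2.2
      · ext t
        show Hpath hu y' ((1, a), t) = Gpath y' (Fmap hu y' a, t)
        simp only [Hpath, Gpath, ContinuousMap.coe_mk]
        show _ = Fpath hu y' (a, unitInterval.symm t)
        simp only [Fpath, ContinuousMap.coe_mk]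
        rw [unitInterval.coe_symm_eq]
        rcases lt_trichotomy (t : ℝ) (1/2) with hlt | heq | hgt
        · rw [if_pos (by rw [Set.Icc.coe_one]; linarith),
            if_neg (by push_neg; linarith)]
          congr 2
          rw [Set.Icc.coe_one]
          ring
        · rw [if_pos (by rw [Set.Icc.coe_one]; linarith),
            if_pos (by linarith)]
          rw [show ((1:I):ℝ) - 2*(t:ℝ) = 0 by rw [Set.Icc.coe_one, heq]; ring,
            show 1 - 2*(1 - (t:ℝ)) = 0 by rw [heq]; ring, projI_zero,
            a.1.1.2.1, a.2.1]
          rfl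
        · rw [if_neg (by rw [Set.Icc.coe_one]; push_neg; linarith),
            if_pos (by linarith)]
          congr 2
          rw [Set.Icc.coe_one]
          have : (2:ℝ) - 1 = 1 := by norm_num
          rw [this, div_one]
          ring
    · ext t
      show Hq y' ((1, a), t) = y'
      simp only [Hq, ContinuousMap.coe_mk]
      rw [show max ((1:I):ℝ) (t:ℝ) = ((1:I):ℝ) by simpa using max_eq_left t.2.2,
        projI_coe, a.2.2]

/-- Path component of the homotopy `F ∘ G ≃ id`; `w = ((s, b), t)`. -/
noncomputable def Kpath : C((I × HomotopyFiber f (u y')) × I, Y) where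
  toFun w := if (w.2 : ℝ) ≤ (1 + (w.1.1 : ℝ))/2 then
      w.1.2.1.2 (projI (2*(w.2:ℝ)/(1 + w.1.1))) else u y'
  continuous_toFun := by
    apply Continuous.if_le
    · refine contEval (by fun_prop) (continuous_projI.comp ?_)
      refine Continuous.div (by fun_prop) (by fun_prop) fun w => ?_
      have h := w.1.1.2.1
      exact ne_of_gt (by linarith : (0:ℝ) < 1 + (w.1.1 : ℝ))
    · exact continuous_const
    · fun_prop
    · fun_prop
    · rintro ⟨⟨s, b⟩, t⟩ h
      simp only at h ⊢
      have hs : (0:ℝ) < 1 + (s:ℝ) := by have := s.2.1; linarith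
      have h1 : 2*(t:ℝ)/(1 + s) = 1 := by
        rw [h]
        field_simp
      rw [h1, projI_one, b.2.2]

/-- The homotopy `F ∘ G ≃ id` as a continuous map. -/
noncomputable def Kmap :
    C(I × HomotopyFiber f (u y'), HomotopyFiber f (u y')) where
  toFun z := ⟨(z.2.1.1, (Kpath y').curry z), by
      constructor
      · show Kpath y' (z, 0) = _
        simp only [Kpath, ContinuousMap.coe_mk]
        rw [if_pos (by
          have := z.1.2.1
          rw [Set.Icc.coe_zero]
          linarith)]
        rw [show 2*(((0:I)):ℝ)/(1 + (z.1:ℝ)) = 0 by rw [Set.Icc.coe_zero]; ring,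
          projI_zero, z.2.2.1]
      · show Kpath y' (z, 1) = _
        simp only [Kpath, ContinuousMap.coe_mk]
        by_cases hc : ((1:I) : ℝ) ≤ (1 + (z.1:ℝ))/2
        · rw [if_pos hc]
          have hs1 : (z.1 : ℝ) = 1 := by
            have := z.1.2.2
            rw [Set.Icc.coe_one] at hc
            linarith
          rw [show 2*(((1:I)):ℝ)/(1 + (z.1:ℝ)) = 1 by
            rw [Set.Icc.coe_one, hs1]; norm_num, projI_one, z.2.2.2]
        · rw [if_neg hc]⟩
  continuous_toFun := by
    apply Continuous.subtype_mk
    exact (by fun_prop : Continuous fun z : I × HomotopyFiber f (u y') => z.2.1.1).prodMk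
      (Kpath y').curry.continuous

/-- The homotopy `F ∘ G ≃ id`. -/
noncomputable def Khomotopy :
    ContinuousMap.Homotopy ((Fmap hu y').comp (Gmap y'))
      (ContinuousMap.id (HomotopyFiber f (u y'))) where
  toContinuousMap := Kmap y'
  map_zero_left b := by
    apply Subtype.ext
    refine Prod.ext rfl ?_
    ext t
    show Kpath y' ((0, b), t) = Fpath hu y' (Gmap y' b, t)
    simp only [Kpath, Fpath, ContinuousMap.coe_mk]
    by_cases hc : (t : ℝ) ≤ 1/2
    · rw [if_pos (by rw [Set.Icc.coe_zero]; linarith), if_pos hc]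
      show b.1.2 _ = Gpath y' (b, _)
      simp only [Gpath, ContinuousMap.coe_mk]
      congr 1
      apply Subtype.ext
      rw [unitInterval.coe_symm_eq, coe_projI, coe_projI, Set.Icc.coe_zero]
      have h1 : 2*(t:ℝ)/(1+0) = 2*(t:ℝ) := by norm_num
      rw [h1]
      have ht0 := t.2.1
      rw [min_eq_right (by linarith : 2*(t:ℝ) ≤ 1),
        max_eq_right (by linarith : (0:ℝ) ≤ 2*(t:ℝ)),
        min_eq_right (by linarith : 1 - 2*(t:ℝ) ≤ 1),
        max_eq_right (by linarith : (0:ℝ) ≤ 1 - 2*(t:ℝ))]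
      ring
    · rw [if_neg (by rw [Set.Icc.coe_zero]; push_neg at hc ⊢; linarith),
        if_neg hc]
      rfl
  map_one_left b := by
    apply Subtype.ext
    refine Prod.ext rfl ?_
    ext t
    show Kpath y' ((1, b), t) = b.1.2 t
    simp only [Kpath, ContinuousMap.coe_mk]
    rw [if_pos (by rw [Set.Icc.coe_one]; have := t.2.2; linarith)]
    congr 1
    rw [show 2*(t:ℝ)/(1 + ((1:I):ℝ)) = (t:ℝ) by rw [Set.Icc.coe_one]; ring, projI_coe]

end

end Stmt4

theorem statement4 {X Y Y' : Type*} [TopologicalSpace X] [TopologicalSpace Y]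
    [TopologicalSpace Y']
    {f : X → Y} (hf : Continuous f) {u : Y' → Y} (hu : Continuous u) (y' : Y') :
    Nonempty
      (ContinuousMap.HomotopyEquiv (HomotopyFiber (pbToY' f u) y') (HomotopyFiber f (u y'))) := by
  exact ⟨{ toFun := Stmt4.Fmap hu y'
           invFun := Stmt4.Gmap y'
           left_inv := ⟨(Stmt4.Hhomotopy hu y').symm⟩
           right_inv := ⟨Stmt4.Khomotopy hu y'⟩ }⟩
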